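/- If v is a bi-infinite α-power-free word and a nonempty finite word w occurs infinitely often in v, then there exist a left-infinite α-power-free word v̄, a finite word η with |η| ≥ (α+1)·α^{|w|}·|w|, a letter x occurring in w, and a right-infinite α-power-free word v̂ such that v = v̄·w·η·x·v̂. -/

import Mathlib

open List

/-- The concrete β-power word: `n` full copies of `r` followed by a prefix `t` of `r`. -/
def powWord {A : Type*} (r : List A) (n : ℕ) (t : List A) : List A :=
  (List.replicate n r).flatten ++ t

/-- `p` is a `β`-power `r^β` for some nonempty `r` and rational `β ≥ α`
    (here `β = |p| / |r|`). -/
def IsPowerGE {A : Type*} (α : ℚ) (p : List A) : Prop :=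
  ∃ (r t : List A) (n : ℕ), r ≠ [] ∧ t <+: r ∧ p = powWord r n t ∧
    α * (r.length : ℚ) ≤ (p.length : ℚ)

/-- A finite word is `α`-power-free if no factor of it is a `β`-power with `β ≥ α`. -/
def PowerFree {A : Type*} (α : ℚ) (w : List A) : Prop :=
  ∀ p : List A, p <:+: w → ¬ IsPowerGE α p

/-- The factor of the right-infinite word `t` of length `n` starting at position `i`. -/
def windowR {A : Type*} (t : ℕ → A) (i n : ℕ) : List A :=
  (List.range n).map fun j => t (i + j)

/-- `u` is a finite factor of the right-infinite word `t`. -/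
def FactorR {A : Type*} (u : List A) (t : ℕ → A) : Prop :=
  ∃ i, u = windowR t i u.length

/-- `u` is a finite factor of the left-infinite word `s`
    (`s 0` is the last letter, `s 1` the one before it, etc.). -/
def FactorL {A : Type*} (u : List A) (s : ℕ → A) : Prop :=
  ∃ i, u = ((List.range u.length).map fun j => s (i + j)).reverse

/-- The factor of the bi-infinite word `v` of length `n` starting at position `i`. -/
def windowZ {A : Type*} (v : ℤ → A) (i : ℤ) (n : ℕ) : List A :=
  (List.range n).map fun j => v (i + j)

/-- `p` occurs in the bi-infinite word `v` at position `i`. -/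
def occursAtZ {A : Type*} (v : ℤ → A) (p : List A) (i : ℤ) : Prop :=
  p = windowZ v i p.length

/-- `u` is a finite factor of the bi-infinite word `v`. -/
def FactorZ {A : Type*} (u : List A) (v : ℤ → A) : Prop :=
  ∃ i : ℤ, u = windowZ v i u.length

/-- A right-infinite word is `α`-power-free if no finite factor is a `β`-power, `β ≥ α`. -/
def PowerFreeR {A : Type*} (α : ℚ) (t : ℕ → A) : Prop :=
  ∀ u : List A, FactorR u t → ¬ IsPowerGE α u

/-- A left-infinite word is `α`-power-free if no finite factor is a `β`-power, `β ≥ α`. -/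
def PowerFreeL {A : Type*} (α : ℚ) (s : ℕ → A) : Prop :=
  ∀ u : List A, FactorL u s → ¬ IsPowerGE α u

/-- A bi-infinite word is `α`-power-free if no finite factor is a `β`-power, `β ≥ α`. -/
def PowerFreeZ {A : Type*} (α : ℚ) (v : ℤ → A) : Prop :=
  ∀ u : List A, FactorZ u v → ¬ IsPowerGE α u

/-- `u` is a recurrent factor of the right-infinite word `t`: it occurs at
    arbitrarily large positions. -/
def RecurrentR {A : Type*} (u : List A) (t : ℕ → A) : Prop :=
  ∀ N : ℕ, ∃ i, N ≤ i ∧ u = windowR t i u.length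

/-- The bi-infinite word `s·w·t`: the left-infinite word `s` on negative positions,
    the finite word `w` on `[0, |w|)`, and the right-infinite word `t` afterwards. -/
def glue {A : Type*} (s : ℕ → A) (w : List A) (t : ℕ → A) : ℤ → A := fun i =>
  if i < 0 then s ((-i - 1).toNat)
  else if h : i.toNat < w.length then w[i.toNat] else t (i.toNat - w.length)

/-- The left-infinite word `s·u`. -/
def appendL {A : Type*} (s : ℕ → A) (u : List A) : ℕ → A := fun n =>
  if h : n < u.length then u[u.length - 1 - n]'(by omega) else s (n - u.length)

/-- `w` occurs in the left-infinite word `s` at distance `i` from the right end: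
    `w` occupies the positions `i + |w| - 1, …, i + 1, i`. -/
def occursAtL {A : Type*} (s : ℕ → A) (w : List A) (i : ℕ) : Prop :=
  w = ((List.range w.length).map fun j => s (i + j)).reverse

/-- The number of occurrences of `p` as a factor of the finite word `w`. -/
def occur {A : Type*} [DecidableEq A] (w p : List A) : ℕ :=
  ((List.range (w.length + 1)).filter fun i => decide (p <+: w.drop i)).length

section Aux
variable {A : Type*}

lemma windowZ_eq (v : ℤ → A) (i : ℤ) (n : ℕ) :
    windowZ v i n = (List.range n).map (fun j : ℕ => v (i + (j : ℤ))) := by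
  unfold windowZ
  induction n with
  | zero => rfl
  | succ k ih =>
      rw [List.range_succ]
      rw [show (do let a ← List.range k ++ [k]; pure ((a : ℤ)) : List ℤ)
            = List.flatMap (α := ℕ) (fun a => [(a : ℤ)]) (List.range k ++ [k]) from rfl]
      simp only [List.flatMap_append, List.map_append, List.flatMap_cons] at *
      rw [show (do let a ← List.range k; pure ((a : ℤ)) : List ℤ)
            = List.flatMap (α := ℕ) (fun a => [(a : ℤ)]) (List.range k) from rfl] at ih
      simp_all

lemma windowZ_length (v : ℤ → A) (i : ℤ) (n : ℕ) : (windowZ v i n).length = n := by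
  rw [windowZ_eq, List.length_map, List.length_range]

lemma windowZ_getElem (v : ℤ → A) (i : ℤ) (n k : ℕ) (h : k < (windowZ v i n).length) :
    (windowZ v i n)[k] = v (i + k) := by
  simp only [windowZ_eq] at h ⊢
  rw [List.getElem_map, List.getElem_range]

lemma windowZ_append (v : ℤ → A) (i : ℤ) (a b : ℕ) :
    windowZ v i (a + b) = windowZ v i a ++ windowZ v (i + a) b := by
  simp only [windowZ_eq]
  rw [List.range_add, List.map_append, List.map_map]
  congr 1
  apply List.map_congr_left
  intro x _
  simp only [Function.comp_apply]
  congr 1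
  push_cast
  ring

lemma rev_window (v : ℤ → A) (c : ℤ) (k i : ℕ) :
    ((List.range k).map fun j => v (c - 1 - ((i + j : ℕ) : ℤ))).reverse
      = windowZ v (c - i - k) k := by
  rw [windowZ_eq]
  apply List.ext_getElem
  · simp
  · intro m h1 h2
    simp only [List.length_reverse, List.length_map, List.length_range] at h1 h2
    rw [List.getElem_reverse, List.getElem_map, List.getElem_map,
      List.getElem_range, List.getElem_range]
    congr 1
    simp only [List.length_map, List.length_range]
    omega

end Aux

/-- If a nonempty word `w` occurs infinitely often in a bi-infinite α-power-free word
    `v`, then `v` can be written (up to shift) as `v̄·w·η·x·v̂` with `v̄` left-infinite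
    α-power-free, `v̂` right-infinite α-power-free, `x` a letter of `w`, and
    `|η| ≥ (α+1)·α^{|w|}·|w|`. -/
theorem decompose_recurrent {A : Type*} [Fintype A] (α : ℚ) (hα : 0 < α)
    (v : ℤ → A) (hv : PowerFreeZ α v) (w : List A) (hw : w ≠ [])
    (hinf : {i : ℤ | occursAtZ v w i}.Infinite) :
    ∃ (vb : ℕ → A) (η : List A) (x : A) (vh : ℕ → A),
      ((α + 1) * α ^ w.length * (w.length : ℚ) ≤ (η.length : ℚ)) ∧ x ∈ w ∧
      PowerFreeL α vb ∧ PowerFreeR α vh ∧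
      ∃ c : ℤ, (fun i => v (i + c)) = glue vb (w ++ η ++ [x]) vh := by

  classical
  set n := w.length with hn
  have hn0 : 0 < n := List.length_pos_iff.mpr hw
  set q : ℚ := (α + 1) * α ^ n * n with hq
  have hq0 : 0 ≤ q := by positivity
  set L : ℕ := ⌈q⌉.toNat with hL
  have hqL : q ≤ (L : ℚ) := by
    have h2 := Int.toNat_of_nonneg (Int.ceil_nonneg hq0)
    rw [hL, show ((⌈q⌉.toNat : ℕ) : ℚ) = ((⌈q⌉ : ℤ) : ℚ) from by exact_mod_cast h2]
    exact Int.le_ceil q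
  -- find two occurrences far apart
  set D : ℤ := ((n + L : ℕ) : ℤ) with hD
  obtain ⟨a, ha⟩ := hinf.nonempty
  obtain ⟨b, hb⟩ := (hinf.diff (Set.finite_Icc (a - D) (a + D))).nonempty
  have hbS : occursAtZ v w b := hb.1
  have hbI : b < a - D ∨ a + D < b := by
    have := hb.2
    simp only [Set.mem_Icc, not_and_or, not_le] at this
    tauto
  obtain ⟨i₀, j, hocc₀, hoccj, hij⟩ :
      ∃ i₀ j : ℤ, occursAtZ v w i₀ ∧ occursAtZ v w j ∧ i₀ + D ≤ j := by
    rcases hbI with h | h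
    · exact ⟨b, a, hbS, ha, by omega⟩
    · exact ⟨a, b, ha, hbS, by omega⟩
  set m : ℕ := (j - i₀ - n).toNat with hm
  have hmZ : (m : ℤ) = j - i₀ - n := by
    rw [hm]; rw [hD] at hij; push_cast at hij ⊢; omega
  have hLm : L ≤ m := by rw [hD] at hij; push_cast at hij; omega
  set η : List A := windowZ v (i₀ + n) m with hη
  set x : A := v j with hx
  set vb : ℕ → A := fun k => v (i₀ - 1 - (k : ℤ)) with hvb
  set vh : ℕ → A := fun k => v (j + 1 + (k : ℤ)) with hvh
  have hηlen : η.length = m := windowZ_length _ _ _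
  refine ⟨vb, η, x, vh, ?_, ?_, ?_, ?_, i₀, ?_⟩
  · rw [hηlen]
    calc q ≤ (L : ℚ) := hqL
    _ ≤ (m : ℚ) := by exact_mod_cast hLm
  · -- x ∈ w
    have hj' : w = (List.range w.length).map (fun k : ℕ => v (j + (k : ℤ))) := by
      conv_lhs => rw [hoccj, windowZ_eq]
    have h0 : v (j + ((0 : ℕ) : ℤ)) ∈ w := by
      rw [hj']
      exact List.mem_map.mpr ⟨0, List.mem_range.mpr (hn ▸ hn0), rfl⟩
    rw [hx]
    simpa using h0
  · -- PowerFreeL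
    rintro u ⟨i, hu⟩
    refine hv u ⟨i₀ - i - u.length, ?_⟩
    conv_lhs => rw [hu]
    exact rev_window v i₀ u.length i
  · -- PowerFreeR
    rintro u ⟨i, hu⟩
    refine hv u ⟨j + 1 + i, ?_⟩
    conv_lhs => rw [hu]
    rw [windowZ_eq]
    unfold windowR
    apply List.map_congr_left
    intro k _
    show v (j + 1 + ((i + k : ℕ) : ℤ)) = _
    congr 1
    push_cast
    ring
  · -- glue equality
    have hWlen : (w ++ η ++ [x]).length = n + m + 1 := by
      simp [hηlen, hn]
      omega
    have hW : w ++ η ++ [x] = windowZ v i₀ (n + m + 1) := by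
      rw [windowZ_append v i₀ (n + m) 1, windowZ_append v i₀ n m]
      have h1 : w = windowZ v i₀ n := hocc₀
      have h2 : [x] = windowZ v (i₀ + ((n + m : ℕ) : ℤ)) 1 := by
        have hjj : i₀ + ((n + m : ℕ) : ℤ) = j := by push_cast; omega
        rw [hjj, windowZ_eq, hx]
        norm_num [List.range_succ]
      rw [← h1, ← hη, ← h2]
    funext i
    unfold glue
    split_ifs with h1 h2
    · rw [hvb]
      congr 1
      omega
    · rw [List.getElem_of_eq hW, windowZ_getElem]
      congr 1
      rw [hWlen] at h2
      omega
    · rw [hvh]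
      congr 1
      rw [hWlen] at h2 ⊢
      push_cast
      omega
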